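/- Let κ ∈ ℕ, κ ≥ 2, and a_0,…,a_{κ−1} ∈ ℝ, and define the planar vector field V : ℝ² → ℝ² by V(w, θ) = ( −w·(−cos((κ−1)θ) + Σ_{α=0}^{κ−1} a_α w^{κ−α} cos((α−1)θ)), −sin((κ−1)θ) + Σ_{α=0}^{κ−1} a_α w^{κ−α} sin((α−1)θ) ). Then the zeros of V on the line {w = 0} with θ ∈ [0, 2π) are exactly the 2(κ−1) points (0, θ_l) with θ_l = π(l−1)/(κ−1), l ∈ {1,…,2(κ−1)}; moreover at each such point V is differentiable and its Jacobian matrix DV(0, θ_l) is lower triangular with diagonal entries (−1)^{l−1} and (κ−1)(−1)^l. In particular det DV(0, θ_l) = −(κ−1) < 0, so each (0, θ_l) is a hyperbolic saddle. -/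

import Mathlib

open Finset Real

lemma clm_decomp (L : ℝ×ℝ →L[ℝ] ℝ) :
    L = (L (1,0)) • ContinuousLinearMap.fst ℝ ℝ ℝ + (L (0,1)) • ContinuousLinearMap.snd ℝ ℝ ℝ := by
  apply ContinuousLinearMap.ext
  rintro ⟨x, y⟩
  have h : ((x,y) : ℝ×ℝ) = x • ((1:ℝ),(0:ℝ)) + y • ((0:ℝ),(1:ℝ)) := by simp [Prod.ext_iff]
  rw [h, map_add, map_smul, map_smul]
  simp [mul_comm]

/-- The desingularized Poincaré compactification at infinity of `x' = Q(x)`.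
With `V(w,θ) = (-w(-cos((κ-1)θ) + Σ_α a_α w^{κ-α} cos((α-1)θ)),
-sin((κ-1)θ) + Σ_α a_α w^{κ-α} sin((α-1)θ))`, the zeros of `V` on `{w = 0}` with
`θ ∈ [0, 2π)` are exactly the points `(0, θ_l)`, `θ_l = π(l-1)/(κ-1)`,
`l ∈ {1,…,2(κ-1)}`; at each such point `V` is differentiable with lower-triangular
Jacobian of diagonal entries `(-1)^{l-1}` and `(κ-1)(-1)^l` (a hyperbolic saddle). -/
theorem zeroHopf_saddles_at_infinity_real_time
    (κ : ℕ) (hκ : 2 ≤ κ) (a : ℕ → ℝ)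
    (V : ℝ × ℝ → ℝ × ℝ)
    (hV : V = fun p : ℝ × ℝ =>
      (-(p.1) * (-Real.cos (((κ : ℝ) - 1) * p.2) +
          ∑ α ∈ Finset.range κ, a α * p.1 ^ (κ - α) * Real.cos (((α : ℝ) - 1) * p.2)),
        -Real.sin (((κ : ℝ) - 1) * p.2) +
          ∑ α ∈ Finset.range κ, a α * p.1 ^ (κ - α) * Real.sin (((α : ℝ) - 1) * p.2))) :
    (∀ θ ∈ Set.Ico (0 : ℝ) (2 * Real.pi),
      (V (0, θ) = 0 ↔ ∃ l : ℕ, 1 ≤ l ∧ l ≤ 2 * (κ - 1) ∧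
        θ = Real.pi * ((l : ℝ) - 1) / ((κ : ℝ) - 1))) ∧
    (∀ l : ℕ, 1 ≤ l → l ≤ 2 * (κ - 1) → ∃ c : ℝ,
      HasFDerivAt V
        ((((-1 : ℝ) ^ (l - 1)) • (ContinuousLinearMap.fst ℝ ℝ ℝ)).prod
          (c • ContinuousLinearMap.fst ℝ ℝ ℝ +
            ((((κ : ℝ) - 1) * (-1 : ℝ) ^ l) • ContinuousLinearMap.snd ℝ ℝ ℝ)))
        (0, Real.pi * ((l : ℝ) - 1) / ((κ : ℝ) - 1))) := by
  subst hV
  have hκR : (2:ℝ) ≤ (κ:ℝ) := by exact_mod_cast hκ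
  have hK0 : ((κ:ℝ) - 1) ≠ 0 := by linarith
  have hπ := Real.pi_pos
  have hsum0 : ∀ (f : ℕ → ℝ),
      (∑ α ∈ Finset.range κ, a α * (0:ℝ)^(κ-α) * f α) = 0 := by
    intro f
    refine Finset.sum_eq_zero fun α hα => ?_
    rw [Finset.mem_range] at hα
    rw [zero_pow (by omega)]
    ring
  constructor
  · intro θ hθ
    constructor
    · intro h
      rw [Prod.mk_eq_zero] at h
      have hs : Real.sin (((κ:ℝ)-1)*θ) = 0 := by
        have h2 := h.2
        rw [hsum0] at h2
        linarith
      obtain ⟨n, hn⟩ := Real.sin_eq_zero_iff.mp hs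
      have hn0 : 0 ≤ n := by
        have : (0:ℝ) ≤ (n:ℝ) := by nlinarith [hθ.1]
        exact_mod_cast this
      have hlt : (n:ℝ) < 2*((κ:ℝ)-1) := by nlinarith [hθ.2]
      have hltn : n < 2*((κ:ℤ)-1) := by
        have : (n:ℝ) < ((2*((κ:ℤ)-1) : ℤ) : ℝ) := by push_cast; linarith
        exact_mod_cast this
      refine ⟨n.toNat + 1, by omega, by omega, ?_⟩
      have hcast : ((n.toNat + 1 : ℕ) : ℝ) - 1 = (n:ℝ) := by
        have h1 : ((n.toNat:ℕ):ℝ) = (n:ℝ) := by exact_mod_cast congrArg (fun k : ℤ => (k:ℝ)) (Int.toNat_of_nonneg hn0)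
        push_cast
        rw [h1]
        ring
      rw [hcast, eq_div_iff hK0]
      linarith [hn]
    · rintro ⟨l, hl1, hl2, rfl⟩
      have hKθ : ((κ:ℝ)-1) * (Real.pi * ((l:ℝ)-1) / ((κ:ℝ)-1)) = ((l-1:ℕ):ℝ) * Real.pi := by
        rw [mul_comm, div_mul_cancel₀ _ hK0, Nat.cast_sub hl1]
        push_cast
        ring
      rw [Prod.mk_eq_zero]
      constructor
      · simp
      · rw [hsum0, hKθ, Real.sin_nat_mul_pi]
        ring
  · intro l hl1 hl2
    obtain ⟨m, rfl⟩ : ∃ m, l = m + 1 := ⟨l - 1, (Nat.succ_pred_eq_of_pos hl1).symm⟩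
    set K : ℝ := (κ:ℝ) - 1 with hKdef
    set θ₀ : ℝ := Real.pi * (((m+1:ℕ):ℝ) - 1) / K with hθ₀def
    have hKθ : K * θ₀ = (m:ℝ) * Real.pi := by
      rw [hθ₀def, mul_comm, div_mul_cancel₀ _ hK0]
      push_cast
      ring
    have hcosK : Real.cos (K * θ₀) = (-1:ℝ)^m := by
      rw [hKθ]
      simpa using Real.cos_nat_mul_pi_sub 0 m
    set p₀ : ℝ × ℝ := (0, θ₀) with hp₀def
    -- first component
    have hg : DifferentiableAt ℝ (fun p : ℝ×ℝ =>
        -Real.cos (K * p.2) +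
          ∑ α ∈ Finset.range κ, a α * p.1 ^ (κ - α) * Real.cos (((α : ℝ) - 1) * p.2)) p₀ := by
      fun_prop
    have h1 := (hasFDerivAt_fst.neg).mul hg.hasFDerivAt
    -- second component pieces
    have hsinD : ∀ c : ℝ, HasFDerivAt (fun p : ℝ×ℝ => Real.sin (c * p.2))
        ((Real.cos (c * p₀.2)) • (c • ContinuousLinearMap.snd ℝ ℝ ℝ)) p₀ :=
      fun c => by have := (Real.hasDerivAt_sin (c * p₀.2)).comp_hasFDerivAt p₀ ((hasFDerivAt_snd (𝕜 := ℝ) (p := p₀)).const_mul c); exact this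
    have hu : ∀ α : ℕ, HasFDerivAt (fun p : ℝ×ℝ => a α * p.1 ^ (κ-α))
        ((a α) • ((((κ-α : ℕ):ℝ) * p₀.1^(κ-α-1)) • ContinuousLinearMap.fst ℝ ℝ ℝ)) p₀ :=
      fun α => ((hasDerivAt_pow (κ-α) p₀.1).comp_hasFDerivAt p₀ hasFDerivAt_fst).const_mul (a α)
    have hsummand := fun (α : ℕ) => (hu α).mul (hsinD ((α:ℝ)-1))
    have hsum := HasFDerivAt.fun_sum (fun α (_ : α ∈ Finset.range κ) => hsummand α)
    have h2 := ((hsinD K).neg).add hsum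
    -- now assemble
    have hprod := HasFDerivAt.prodMk h1 h2
    set c0 : ℝ := ∑ α ∈ Finset.range κ,
      Real.sin (((α:ℝ)-1) * θ₀) * (a α * ((((κ-α:ℕ)):ℝ) * (0:ℝ)^(κ-α-1))) with hc0
    refine ⟨c0, hprod.congr_fderiv ?_⟩
    have hp1 : p₀.1 = (0:ℝ) := rfl
    have hp2 : p₀.2 = θ₀ := rfl
    rw [hp1, hp2, hsum0, hcosK]
    have hsum2 : (∑ α ∈ Finset.range κ,
        ((a α * (0:ℝ) ^ (κ - α)) • Real.cos (((α:ℝ) - 1) * θ₀) • ((α:ℝ) - 1) • ContinuousLinearMap.snd ℝ ℝ ℝ +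
          Real.sin (((α:ℝ) - 1) * θ₀) • a α • ((((κ - α:ℕ)):ℝ) * (0:ℝ) ^ (κ - α - 1)) • ContinuousLinearMap.fst ℝ ℝ ℝ))
        = c0 • ContinuousLinearMap.fst ℝ ℝ ℝ := by
      rw [hc0, Finset.sum_smul]
      refine Finset.sum_congr rfl fun α hα => ?_
      rw [Finset.mem_range] at hα
      rw [zero_pow (by omega : κ - α ≠ 0), mul_zero, zero_smul, zero_add, smul_smul, smul_smul, mul_assoc]
    rw [hsum2]
    congr 1
    · rw [Nat.add_sub_cancel, Pi.neg_apply, hp1, neg_zero]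
      module
    · rw [pow_succ]
      module
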